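/- For natural numbers a, n, m, the identity C(C(a,m), n) = ∑_{r=0}^{nm} c(n,m,r) · C(a,r) holds, where c(n,m,r) is the number of n-element sets {S₁,…,Sₙ} of pairwise distinct m-element subsets of {1,…,r} whose union S₁ ∪ ⋯ ∪ Sₙ equals {1,…,r}, and C denotes the binomial coefficient. -/

import Mathlib

open Finset

def coverCount (n m r : ℕ) : ℕ :=
  ((((Finset.range r).powersetCard m).powersetCard n).filter
    fun S => S.sup id = Finset.range r).card

lemma sup_map_eq (S : Finset (Finset ℕ)) (e : ℕ ↪ ℕ) :
    (S.sup fun T => T.map e) = (S.sup id).map e := by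
  induction S using Finset.induction with
  | empty => simp
  | insert _ _ h ih => simp [Finset.sup_insert, ih, Finset.map_union]

lemma fiber_map (n m : ℕ) (V : Finset ℕ) (e : ℕ ↪ ℕ) :
    ((((V.map e).powersetCard m).powersetCard n).filter
        fun S => S.sup id = V.map e).card
    = (((V.powersetCard m).powersetCard n).filter fun S => S.sup id = V).card := by
  rw [powersetCard_map, powersetCard_map, filter_map, card_map]
  congr 1
  apply filter_congr
  intro S _
  have h1 : ((mapEmbedding (mapEmbedding e).toEmbedding).toEmbedding S).sup id
      = (S.sup id).map e := by
    show (S.map (mapEmbedding e).toEmbedding).sup id = (S.sup id).map e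
    rw [Finset.sup_map]
    have : (id ∘ ⇑(mapEmbedding e).toEmbedding) = fun T : Finset ℕ => T.map e := rfl
    rw [this]
    exact sup_map_eq S e
  simp only [Function.comp_apply]
  rw [h1]
  exact ⟨fun h => Finset.map_injective e h, fun h => by rw [h]⟩

lemma fiber_card (n m r : ℕ) (U : Finset ℕ) (h : U.card = r) :
    (((U.powersetCard m).powersetCard n).filter fun S => S.sup id = U).card
      = coverCount n m r := by
  classical
  set g : ℕ → ℕ := fun i => if hi : i < r then (U.orderEmbOfFin h ⟨i, hi⟩ : ℕ)
    else i + U.sup id + 1 with hg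
  have hmem : ∀ i (hi : i < r), (U.orderEmbOfFin h ⟨i, hi⟩ : ℕ) ∈ U :=
    fun i hi => Finset.orderEmbOfFin_mem U h ⟨i, hi⟩
  have hle : ∀ i (hi : i < r), (U.orderEmbOfFin h ⟨i, hi⟩ : ℕ) ≤ U.sup id :=
    fun i hi => Finset.le_sup (f := id) (hmem i hi)
  have hginj : Function.Injective g := by
    intro i j hij
    simp only [hg] at hij
    by_cases hi : i < r <;> by_cases hj : j < r <;> simp [hi, hj] at hij
    · exact hij
    · have := hle i hi; omega
    · have := hle j hj; omega
    · omega
  set e : ℕ ↪ ℕ := ⟨g, hginj⟩ with he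
  have hmap : (Finset.range r).map e = U := by
    apply Finset.eq_of_subset_of_card_le
    · intro x hx
      simp only [Finset.mem_map, Finset.mem_range] at hx
      obtain ⟨i, hi, rfl⟩ := hx
      simpa only [he, hg, Function.Embedding.coeFn_mk, dif_pos hi] using hmem i hi
    · rw [Finset.card_map, Finset.card_range, h]
  rw [← hmap]
  unfold coverCount
  exact fiber_map n m (Finset.range r) e

lemma coverCount_eq_zero (n m r : ℕ) (h : n * m < r) : coverCount n m r = 0 := by
  rw [coverCount, Finset.card_eq_zero, Finset.filter_eq_empty_iff]
  intro S hS hsup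
  rw [Finset.mem_powersetCard] at hS
  obtain ⟨hsub, hcard⟩ := hS
  have hle : (S.sup id).card ≤ n * m := by
    rw [Finset.sup_eq_biUnion]
    calc (S.biUnion id).card ≤ ∑ T ∈ S, (id T).card := Finset.card_biUnion_le
      _ = ∑ T ∈ S, m := by
          apply Finset.sum_congr rfl
          intro T hT
          exact (Finset.mem_powersetCard.mp (hsub hT)).2
      _ = n * m := by rw [Finset.sum_const, hcard, smul_eq_mul]
  rw [hsup, Finset.card_range] at hle
  omega

theorem choose_choose_eq_sum_coverCount (a n m : ℕ) :
    (a.choose m).choose n =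
      ∑ r ∈ Finset.range (n * m + 1), coverCount n m r * a.choose r := by
  classical
  have hL : (a.choose m).choose n
      = (((Finset.range a).powersetCard m).powersetCard n).card := by
    rw [Finset.card_powersetCard, Finset.card_powersetCard, Finset.card_range]
  set A := ((Finset.range a).powersetCard m).powersetCard n with hA
  have hfib : A.card = ∑ U ∈ (Finset.range a).powerset,
      (A.filter fun S => S.sup id = U).card := by
    apply Finset.card_eq_sum_card_fiberwise
    intro S hS
    rw [Finset.mem_coe, Finset.mem_powerset, ← Finset.le_iff_subset]
    rw [Finset.mem_coe, hA, Finset.mem_powersetCard] at hS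
    apply Finset.sup_le
    intro T hT
    exact Finset.le_iff_subset.mpr (Finset.mem_powersetCard.mp (hS.1 hT)).1
  have hfil : ∀ U ∈ (Finset.range a).powerset,
      (A.filter fun S => S.sup id = U)
        = ((U.powersetCard m).powersetCard n).filter fun S => S.sup id = U := by
    intro U hU
    rw [Finset.mem_powerset] at hU
    ext S
    simp only [Finset.mem_filter, hA, Finset.mem_powersetCard]
    constructor
    · rintro ⟨⟨hsub, hcard⟩, hsup⟩
      refine ⟨⟨fun T hT => ?_, hcard⟩, hsup⟩
      obtain ⟨hT1, hT2⟩ := Finset.mem_powersetCard.mp (hsub hT)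
      have hTU : T ⊆ U := hsup ▸ Finset.le_iff_subset.mp (Finset.le_sup (f := id) hT)
      exact Finset.mem_powersetCard.mpr ⟨hTU, hT2⟩
    · rintro ⟨⟨hsub, hcard⟩, hsup⟩
      refine ⟨⟨fun T hT => ?_, hcard⟩, hsup⟩
      obtain ⟨hT1, hT2⟩ := Finset.mem_powersetCard.mp (hsub hT)
      exact Finset.mem_powersetCard.mpr ⟨hT1.trans hU, hT2⟩
  have hstep : A.card = ∑ U ∈ (Finset.range a).powerset, coverCount n m U.card := by
    rw [hfib]
    apply Finset.sum_congr rfl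
    intro U hU
    rw [hfil U hU]
    exact fiber_card n m U.card U rfl
  have hgroup : ∑ U ∈ (Finset.range a).powerset, coverCount n m U.card
      = ∑ r ∈ Finset.range (a + 1), coverCount n m r * a.choose r := by
    rw [Finset.sum_powerset]
    rw [Finset.card_range]
    apply Finset.sum_congr rfl
    intro r _
    rw [Finset.sum_congr rfl (fun U hU => by
      rw [(Finset.mem_powersetCard.mp hU).2]),
      Finset.sum_const, Finset.card_powersetCard, Finset.card_range, smul_eq_mul,
      mul_comm]
  -- extend both sums to range (max)
  have hzero1 : ∀ r ∈ Finset.range (a + n * m + 1), r ∉ Finset.range (a + 1) →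
      coverCount n m r * a.choose r = 0 := by
    intro r _ hr
    rw [Finset.mem_range, not_lt] at hr
    rw [Nat.choose_eq_zero_of_lt (by omega), mul_zero]
  have hzero2 : ∀ r ∈ Finset.range (a + n * m + 1), r ∉ Finset.range (n * m + 1) →
      coverCount n m r * a.choose r = 0 := by
    intro r _ hr
    rw [Finset.mem_range, not_lt] at hr
    rw [coverCount_eq_zero n m r (by omega), zero_mul]
  rw [hL, hstep, hgroup,
    Finset.sum_subset (Finset.range_subset_range.mpr (by omega)) hzero1,
    ← Finset.sum_subset (Finset.range_subset_range.mpr (by omega)) hzero2]
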